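/- (Per-iteration inequality for Frank-Wolfe with an inexact gradient, non-convex case) Let K ⊆ ℝ^d be a convex compact set with diameter D = sup_{x,y∈K}‖x−y‖, and let f : ℝ^d → ℝ be differentiable with L-Lipschitz gradient on K. Let x ∈ K, let ḡ ∈ ℝ^d, let v ∈ K satisfy ⟨v, ḡ⟩ ≤ ⟨u, ḡ⟩ for all u ∈ K, let η ∈ [0,1], and set x⁺ = x + η(v − x). Then η·G(x) ≤ f(x) − f(x⁺) + η·D·‖∇f(x) − ḡ‖ + (L/2)·η²·D², where G(x) = max_{u∈K} ⟨u − x, −∇f(x)⟩ is the Frank-Wolfe gap of f at x. -/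

import Mathlib

open scoped RealInnerProductSpace

/-- The Frank-Wolfe gap of `f` over `K` at `x`: `G(x) = sup_{u ∈ K} ⟪u - x, -∇f x⟫`. -/
noncomputable def fwGap {d : ℕ} (K : Set (EuclideanSpace ℝ (Fin d)))
    (f : EuclideanSpace ℝ (Fin d) → ℝ) (x : EuclideanSpace ℝ (Fin d)) : ℝ :=
  sSup ((fun u => ⟪u - x, -gradient f x⟫) '' K)

lemma descent_aux {E : Type*} [NormedAddCommGroup E] [InnerProductSpace ℝ E] [CompleteSpace E]
    (f : E → ℝ) (hdiff : Differentiable ℝ f) (x h : E) (L : ℝ)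
    (hLip : ∀ s ∈ Set.Icc (0:ℝ) 1, ∀ t ∈ Set.Icc (0:ℝ) 1,
      ‖gradient f (x + t • h) - gradient f (x + s • h)‖ ≤ L * (|t - s| * ‖h‖)) :
    f (x + h) ≤ f x + ⟪gradient f x, h⟫ + L / 2 * ‖h‖ ^ 2 := by
  set φ' : ℝ → ℝ := fun t => ⟪gradient f (x + t • h), h⟫ with hφ'
  have hfd : ∀ y : E, HasFDerivAt f (InnerProductSpace.toDual ℝ E (gradient f y)) y :=
    fun y => ((hdiff y).hasGradientAt).hasFDerivAt
  have hderiv : ∀ t ∈ Set.uIcc (0:ℝ) 1, HasDerivAt (fun t => f (x + t • h)) (φ' t) t := by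
    intro t _
    have hc : HasDerivAt (fun t : ℝ => x + t • h) h t := by
      simpa using ((hasDerivAt_id t).smul_const h).const_add x
    have := (hfd (x + t • h)).comp_hasDerivAt t hc
    rw [InnerProductSpace.toDual_apply_apply] at this; exact this
  have hlip : ∀ s ∈ Set.Icc (0:ℝ) 1, ∀ t ∈ Set.Icc (0:ℝ) 1,
      |φ' t - φ' s| ≤ (L * ‖h‖ ^ 2) * |t - s| := by
    intro s hs t ht
    have h1 := hLip s hs t ht
    calc |φ' t - φ' s| = |⟪gradient f (x + t • h) - gradient f (x + s • h), h⟫| := by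
          rw [hφ']; rw [← inner_sub_left]
      _ ≤ ‖gradient f (x + t • h) - gradient f (x + s • h)‖ * ‖h‖ :=
          abs_real_inner_le_norm _ _
      _ ≤ (L * (|t - s| * ‖h‖)) * ‖h‖ := mul_le_mul_of_nonneg_right h1 (norm_nonneg _)
      _ = (L * ‖h‖ ^ 2) * |t - s| := by ring
  have hcont : ContinuousOn φ' (Set.Icc (0:ℝ) 1) := by
    have : LipschitzOnWith (Real.toNNReal (L * ‖h‖ ^ 2)) φ' (Set.Icc (0:ℝ) 1) := by
      rw [lipschitzOnWith_iff_dist_le_mul]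
      intro a ha b hb
      rw [Real.dist_eq, Real.dist_eq]
      calc |φ' a - φ' b| ≤ (L * ‖h‖ ^ 2) * |a - b| := hlip b hb a ha
        _ ≤ (Real.toNNReal (L * ‖h‖ ^ 2) : ℝ) * |a - b| :=
          mul_le_mul_of_nonneg_right (Real.le_coe_toNNReal _) (abs_nonneg _)
    exact this.continuousOn
  have hInt : IntervalIntegrable φ' MeasureTheory.volume 0 1 := by
    apply ContinuousOn.intervalIntegrable
    rwa [Set.uIcc_of_le (zero_le_one : (0:ℝ) ≤ 1)]
  have heq : ∫ t in (0:ℝ)..1, φ' t = f (x + h) - f x := by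
    have := intervalIntegral.integral_eq_sub_of_hasDerivAt hderiv hInt
    simpa using this
  have hbound : ∀ t ∈ Set.Icc (0:ℝ) 1, φ' t ≤ φ' 0 + (L * ‖h‖ ^ 2) * t := by
    intro t ht
    have h1 := hlip 0 (by constructor <;> norm_num) t ht
    have h2 : |t - 0| = t := by rw [sub_zero, abs_of_nonneg ht.1]
    rw [h2] at h1
    have := abs_le.mp h1
    linarith [this.2]
  have hcont2 : Continuous (fun t : ℝ => φ' 0 + (L * ‖h‖ ^ 2) * t) := by fun_prop
  have hInt2 : IntervalIntegrable (fun t : ℝ => φ' 0 + (L * ‖h‖ ^ 2) * t)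
      MeasureTheory.volume 0 1 := hcont2.intervalIntegrable _ _
  have hmono : ∫ t in (0:ℝ)..1, φ' t ≤ ∫ t in (0:ℝ)..1, (φ' 0 + (L * ‖h‖ ^ 2) * t) :=
    intervalIntegral.integral_mono_on zero_le_one hInt hInt2 hbound
  have hval : ∫ t in (0:ℝ)..1, (φ' 0 + (L * ‖h‖ ^ 2) * t) = φ' 0 + L * ‖h‖ ^ 2 / 2 := by
    rw [intervalIntegral.integral_add intervalIntegrable_const
        (((by fun_prop : Continuous fun t : ℝ => L * ‖h‖ ^ 2 * t).intervalIntegrable _ _)),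
      intervalIntegral.integral_const, intervalIntegral.integral_const_mul]
    simp [integral_id]
    ring
  have hφ0 : φ' 0 = ⟪gradient f x, h⟫ := by simp [hφ']
  rw [heq] at hmono
  rw [hval, hφ0] at hmono
  linarith

/-- per-iteration inequality for Frank-Wolfe with an inexact gradient,
non-convex case. `K ⊆ ℝ^d` convex compact with diameter `D`, `f` differentiable with
`L`-Lipschitz gradient on `K`, `x ∈ K`, `v ∈ K` a linear minimizer for `ḡ`,
`η ∈ [0,1]`, `x⁺ = x + η(v - x)`. Then
`η·G(x) ≤ f x - f x⁺ + η·D·‖∇f x - ḡ‖ + (L/2)·η²·D²`, where `G` is the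
Frank-Wolfe gap. -/
theorem stmt10 {d : ℕ} (K : Set (EuclideanSpace ℝ (Fin d)))
    (hKconv : Convex ℝ K) (hKcomp : IsCompact K)
    (D L : ℝ) (hD : D = Metric.diam K)
    (f : EuclideanSpace ℝ (Fin d) → ℝ)
    (hdiff : Differentiable ℝ f)
    (hsmooth : ∀ x ∈ K, ∀ y ∈ K, ‖gradient f x - gradient f y‖ ≤ L * ‖x - y‖)
    (x : EuclideanSpace ℝ (Fin d)) (hx : x ∈ K)
    (gbar : EuclideanSpace ℝ (Fin d))
    (v : EuclideanSpace ℝ (Fin d)) (hv : v ∈ K)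
    (hvopt : ∀ u ∈ K, ⟪v, gbar⟫ ≤ ⟪u, gbar⟫)
    (η : ℝ) (hη0 : 0 ≤ η) (hη1 : η ≤ 1)
    (xplus : EuclideanSpace ℝ (Fin d)) (hxplus : xplus = x + η • (v - x)) :
    η * fwGap K f x ≤ f x - f xplus
      + η * D * ‖gradient f x - gbar‖ + L / 2 * η ^ 2 * D ^ 2 := by
  have hD0 : 0 ≤ D := hD ▸ Metric.diam_nonneg
  set e : ℝ := ‖gradient f x - gbar‖ with he
  have he0 : 0 ≤ e := norm_nonneg _
  -- distance bound inside K
  have hdist : ∀ a ∈ K, ∀ b ∈ K, ‖a - b‖ ≤ D := by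
    intro a ha b hb
    rw [hD, ← dist_eq_norm]
    exact Metric.dist_le_diam_of_mem hKcomp.isBounded ha hb
  -- gap bound
  have hsup : fwGap K f x ≤ ⟪v - x, -gradient f x⟫ + D * e := by
    apply csSup_le ((Set.nonempty_of_mem hx).image _)
    rintro b ⟨u, hu, rfl⟩
    have hcs : ⟪u - v, gbar - gradient f x⟫ ≤ D * e := by
      calc ⟪u - v, gbar - gradient f x⟫ ≤ ‖u - v‖ * ‖gbar - gradient f x‖ :=
            real_inner_le_norm _ _
        _ = ‖u - v‖ * e := by rw [he, norm_sub_rev gbar]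
        _ ≤ D * e := mul_le_mul_of_nonneg_right (hdist u hu v hv) he0
    have hopt : ⟪v, gbar⟫ - ⟪u, gbar⟫ ≤ 0 := sub_nonpos.mpr (hvopt u hu)
    have hexp : ⟪u - x, -gradient f x⟫ = ⟪v - x, -gradient f x⟫
        + ⟪u - v, gbar - gradient f x⟫ + (⟪v, gbar⟫ - ⟪u, gbar⟫) := by
      simp only [inner_sub_left, inner_sub_right, inner_neg_right]
      ring
    linarith
  -- membership of segment points
  set h : EuclideanSpace ℝ (Fin d) := η • (v - x) with hh
  have hmem : ∀ t ∈ Set.Icc (0:ℝ) 1, x + t • h ∈ K := by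
    intro t ht
    have ha : (0:ℝ) ≤ 1 - t * η := by nlinarith [ht.1, ht.2]
    have hb : (0:ℝ) ≤ t * η := mul_nonneg ht.1 hη0
    have := hKconv hx hv ha hb (by ring)
    convert this using 1
    rw [hh]
    module
  -- Lipschitz along the segment
  have hLipSeg : ∀ s ∈ Set.Icc (0:ℝ) 1, ∀ t ∈ Set.Icc (0:ℝ) 1,
      ‖gradient f (x + t • h) - gradient f (x + s • h)‖ ≤ L * (|t - s| * ‖h‖) := by
    intro s hs t ht
    have := hsmooth _ (hmem t ht) _ (hmem s hs)
    have hnorm : ‖(x + t • h) - (x + s • h)‖ = |t - s| * ‖h‖ := by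
      have : (x + t • h) - (x + s • h) = (t - s) • h := by module
      rw [this, norm_smul, Real.norm_eq_abs]
    rwa [hnorm] at this
  have hdesc := descent_aux f hdiff x h L hLipSeg
  -- relate to xplus
  have hxp : xplus = x + h := by rw [hxplus, hh]
  have hinner : ⟪gradient f x, h⟫ = -(η * ⟪v - x, -gradient f x⟫) := by
    rw [hh, real_inner_smul_right, inner_neg_right, real_inner_comm]
    ring
  have hnormh : ‖h‖ ^ 2 = η ^ 2 * ‖v - x‖ ^ 2 := by
    rw [hh, norm_smul, Real.norm_eq_abs, abs_of_nonneg hη0, mul_pow]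
  -- L * ‖v - x‖^2 ≤ L * D^2
  have hkey : L * ‖v - x‖ ^ 2 ≤ L * D ^ 2 := by
    by_cases hKsub : K.Subsingleton
    · have hvx : v = x := hKsub hv hx
      have hDz : D = 0 := by rw [hD, Metric.diam_subsingleton hKsub]
      simp [hvx, hDz]
    · obtain ⟨a, ha, b, hb, hab⟩ := Set.not_subsingleton_iff.mp hKsub
      have hpos : 0 < ‖a - b‖ := norm_pos_iff.mpr (sub_ne_zero.mpr hab)
      have h1 := hsmooth a ha b hb
      have h2 : (0:ℝ) ≤ ‖gradient f a - gradient f b‖ := norm_nonneg _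
      have hL : 0 ≤ L := by nlinarith
      have hvx : ‖v - x‖ ≤ D := hdist v hv x hx
      exact mul_le_mul_of_nonneg_left (pow_le_pow_left₀ (norm_nonneg _) hvx 2) hL
  have hgap := mul_le_mul_of_nonneg_left hsup hη0
  have h5 : L / 2 * ‖h‖ ^ 2 ≤ L / 2 * η ^ 2 * D ^ 2 := by
    rw [hnormh]
    nlinarith [mul_le_mul_of_nonneg_left hkey (by positivity : (0:ℝ) ≤ η ^ 2 / 2)]
  rw [mul_add, ← mul_assoc] at hgap
  rw [hxp]
  linarith [hdesc, hgap, hinner, h5]
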